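/- Let a > 0, k₊ = √(a/2), and A_T ∈ ℝ. If T ≥ (1/√(2a)) · (π/2 - arctan(A_T/k₊)), then there exists no differentiable function A : [0, T] → ℝ satisfying A'(t) = -a - 2·A(t)² for all t ∈ [0, T] together with A(T) = A_T. That is, for a > 0 the terminal value problem for the Riccati equation is solvable on [0, T] only for T < (1/√(2a)) · (π/2 - arctan(A_T/k₊)). -/

import Mathlib

open Real

/-- For `a > 0`, `k₊ = √(a/2)` and any terminal data `A_T`, if
`T ≥ (1/√(2a)) (π/2 - arctan(A_T/k₊))` then there is no differentiable function
`A : [0,T] → ℝ` solving the Riccati equation `A' = -a - 2A²` on `[0, T]` with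
`A(T) = A_T`: the terminal value problem is solvable on `[0,T]` only for
`T < (1/√(2a)) (π/2 - arctan(A_T/k₊))`. -/
theorem riccati_nonexistence_a_pos
    (a T A_T k : ℝ) (ha : 0 < a) (hk : k = Real.sqrt (a / 2))
    (hT : T ≥ (1 / Real.sqrt (2 * a)) * (π / 2 - Real.arctan (A_T / k))) :
    ¬ ∃ A : ℝ → ℝ,
        (∀ t ∈ Set.Icc (0 : ℝ) T, HasDerivAt A (-a - 2 * (A t) ^ 2) t) ∧
        A T = A_T := by
  rintro ⟨A, hA, hAT⟩
  have hk0 : 0 < k := hk ▸ Real.sqrt_pos.mpr (by linarith)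
  have hk2 : k ^ 2 = a / 2 := by rw [hk, Real.sq_sqrt (by linarith)]
  have hsq : Real.sqrt (2 * a) = 2 * k := by
    rw [hk, show (2 * a : ℝ) = 2 ^ 2 * (a / 2) by ring, Real.sqrt_mul (by positivity),
      Real.sqrt_sq (by norm_num)]
  have hsq0 : 0 < Real.sqrt (2 * a) := by rw [hsq]; positivity
  -- T > 0
  have harctan : Real.arctan (A_T / k) < π / 2 := Real.arctan_lt_pi_div_two _
  have hT0 : 0 < T := by
    have : 0 < (1 / Real.sqrt (2 * a)) * (π / 2 - Real.arctan (A_T / k)) := by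
      apply mul_pos (by positivity) (by linarith)
    linarith
  set g : ℝ → ℝ := fun t => Real.arctan (A t / k) + 2 * k * t with hg_def
  have hg : ∀ t ∈ Set.Icc (0 : ℝ) T, HasDerivAt g 0 t := by
    intro t ht
    have h1 := (hA t ht).div_const k
    have h2 := (Real.hasDerivAt_arctan (A t / k)).comp t h1
    have h3 := h2.add ((hasDerivAt_id t).const_mul (2 * k))
    refine h3.congr_deriv ?_
    have hden : 0 < 1 + (A t / k) ^ 2 := by positivity
    field_simp
    nlinarith [sq_nonneg (A t), hk2]
  have hcont : ContinuousOn g (Set.Icc 0 T) :=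
    fun t ht => (hg t ht).continuousAt.continuousWithinAt
  obtain ⟨c, hc, hderiv⟩ := exists_hasDerivAt_eq_slope g (fun _ => 0) hT0 hcont
    (fun x hx => hg x ⟨le_of_lt hx.1, le_of_lt hx.2⟩)
  have hgeq : g T = g 0 := by
    have : (0 : ℝ) = (g T - g 0) / (T - 0) := hderiv
    have hne : T - 0 ≠ 0 := by linarith
    field_simp at this
    linarith
  have hgT : π / 2 ≤ g T := by
    have h1 : π / 2 - Real.arctan (A_T / k) ≤ Real.sqrt (2 * a) * T := by
      rw [ge_iff_le, div_mul_eq_mul_div, one_mul, div_le_iff₀ hsq0] at hT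
      linarith [hT]
    have h2 : g T = Real.arctan (A_T / k) + 2 * k * T := by
      simp only [hg_def, hAT]
    rw [h2]
    rw [hsq] at h1
    linarith
  have hg0 : g 0 < π / 2 := by
    have h2 : g 0 = Real.arctan (A 0 / k) := by simp only [hg_def, mul_zero, add_zero]
    rw [h2]
    exact Real.arctan_lt_pi_div_two _
  rw [hgeq] at hgT
  exact absurd hgT (not_le.mpr hg0)
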